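/- There exists a C¹ function b : ℝ → ℝ and a probability density φ on ℝ with ∫_ℝ b'(x)² φ(x) dx < ∞ but ∫_ℝ (sup_{s∈[−|x|,|x|]} |b'(s)|)² φ(x) dx = ∞. In particular this holds with φ(x) proportional to (1+x²)^{−1} and b' supported on the intervals [n, n + 1/n²] (n ≥ 1) with |b'| ≤ n there and |b'| = n on a subinterval of positive measure. -/

import Mathlib

open MeasureTheory

namespace Stmt18

noncomputable def tent (t : ℝ) : ℝ := max 0 (min 1 (min (3 * t) (3 * (1 - t))))

lemma tent_nonneg (t : ℝ) : 0 ≤ tent t := le_max_left _ _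

lemma tent_le_one (t : ℝ) : tent t ≤ 1 :=
  max_le (by norm_num) (min_le_left _ _)

lemma tent_eq_zero_of_nonpos {t : ℝ} (h : t ≤ 0) : tent t = 0 := by
  have h1 : min (3 * t) (3 * (1 - t)) ≤ 0 := le_trans (min_le_left _ _) (by linarith)
  exact max_eq_left (le_trans (min_le_right _ _) h1)

lemma tent_eq_zero_of_one_le {t : ℝ} (h : 1 ≤ t) : tent t = 0 := by
  have h1 : min (3 * t) (3 * (1 - t)) ≤ 0 := le_trans (min_le_right _ _) (by linarith)
  exact max_eq_left (le_trans (min_le_right _ _) h1)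

lemma tent_eq_one {t : ℝ} (h1 : 1/3 ≤ t) (h2 : t ≤ 2/3) : tent t = 1 := by
  have hm : (1:ℝ) ≤ min (3 * t) (3 * (1 - t)) := le_min (by linarith) (by linarith)
  unfold tent
  rw [min_eq_left hm]
  exact max_eq_right zero_le_one

lemma tent_pos_lt {t : ℝ} (h : tent t ≠ 0) : 0 < t ∧ t < 1 := by
  constructor
  · by_contra h'; exact h (tent_eq_zero_of_nonpos (not_lt.1 h'))
  · by_contra h'; exact h (tent_eq_zero_of_one_le (not_lt.1 h'))

lemma tent_continuous : Continuous tent := by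
  unfold tent; fun_prop

noncomputable def bump (m : ℕ) (x : ℝ) : ℝ := m * tent ((m:ℝ)^2 * (x - m))

lemma bump_nonneg (m : ℕ) (x : ℝ) : 0 ≤ bump m x :=
  mul_nonneg (Nat.cast_nonneg m) (tent_nonneg _)

lemma bump_le (m : ℕ) (x : ℝ) : bump m x ≤ m := by
  have := tent_le_one ((m:ℝ)^2 * (x - m))
  calc bump m x ≤ (m:ℝ) * 1 :=
        mul_le_mul_of_nonneg_left this (Nat.cast_nonneg m)
    _ = m := mul_one _

lemma bump_continuous (m : ℕ) : Continuous (bump m) := by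
  unfold bump
  exact continuous_const.mul (tent_continuous.comp (by fun_prop))

lemma bump_eq_zero_of_le {m : ℕ} {x : ℝ} (h : x ≤ m) : bump m x = 0 := by
  unfold bump
  rw [tent_eq_zero_of_nonpos, mul_zero]
  have : x - m ≤ 0 := by linarith
  exact mul_nonpos_of_nonneg_of_nonpos (by positivity) this

lemma bump_eq_zero_of_ge {m : ℕ} (hm : 1 ≤ m) {x : ℝ}
    (h : (m:ℝ) + 1/(m:ℝ)^2 ≤ x) : bump m x = 0 := by
  have hm1 : (1:ℝ) ≤ (m:ℝ) := by exact_mod_cast hm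
  have hm2 : (0:ℝ) < (m:ℝ)^2 := by positivity
  unfold bump
  rw [tent_eq_zero_of_one_le, mul_zero]
  have h1 : 1/(m:ℝ)^2 ≤ x - m := by linarith
  calc (1:ℝ) = (m:ℝ)^2 * (1/(m:ℝ)^2) := by field_simp
    _ ≤ (m:ℝ)^2 * (x - m) := by
        exact mul_le_mul_of_nonneg_left h1 (le_of_lt hm2)

lemma bump_support {m : ℕ} (hm : 1 ≤ m) {x : ℝ} (h : bump m x ≠ 0) :
    x ∈ Set.Icc (m:ℝ) ((m:ℝ) + 1/(m:ℝ)^2) := by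
  have hm1 : (1:ℝ) ≤ (m:ℝ) := by exact_mod_cast hm
  have hm2 : (0:ℝ) < (m:ℝ)^2 := by positivity
  have ht : tent ((m:ℝ)^2 * (x - m)) ≠ 0 := by
    intro h0; apply h; unfold bump; rw [h0, mul_zero]
  obtain ⟨h1, h2⟩ := tent_pos_lt ht
  constructor
  · nlinarith
  · have : x - m < 1/(m:ℝ)^2 := by
      rw [lt_div_iff₀ hm2]; nlinarith
    linarith

noncomputable def g (x : ℝ) : ℝ := ∑' n : ℕ, bump (n+1) x

lemma g_eq_sum {N : ℕ} {x : ℝ} (hx : x < N) :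
    g x = ∑ n ∈ Finset.range N, bump (n+1) x := by
  apply tsum_eq_sum
  intro n hn
  have hNn : N ≤ n := by simpa using hn
  apply bump_eq_zero_of_le
  have : (N:ℝ) ≤ ((n+1 : ℕ) : ℝ) := by exact_mod_cast Nat.le_succ_of_le hNn
  linarith

lemma g_continuous : Continuous g := by
  rw [continuous_iff_continuousAt]
  intro x
  obtain ⟨N, hN⟩ := exists_nat_gt x
  have hc : Continuous fun y => ∑ n ∈ Finset.range N, bump (n+1) y :=
    continuous_finset_sum _ fun i _ => bump_continuous (i+1)
  apply hc.continuousAt.congr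
  filter_upwards [Iio_mem_nhds hN] with y hy
  exact (g_eq_sum hy).symm

lemma g_nonneg (x : ℝ) : 0 ≤ g x := tsum_nonneg fun n => bump_nonneg _ _

lemma g_eq_bump {k : ℕ} (hk : 1 ≤ k) {x : ℝ}
    (hx : x ∈ Set.Icc (k:ℝ) ((k:ℝ) + 1/(k:ℝ)^2)) : g x = bump k x := by
  have hk1 : (1:ℝ) ≤ (k:ℝ) := by exact_mod_cast hk
  have hkey : ∀ n : ℕ, n ≠ k - 1 → bump (n+1) x = 0 := by
    intro n hn
    have hne : n + 1 ≠ k := by omega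
    rcases lt_or_gt_of_ne hne with h | h
    · -- n+1 < k, so x ≥ k ≥ (n+1)+1 ≥ (n+1) + 1/(n+1)²
      apply bump_eq_zero_of_ge (by omega)
      have h1 : ((n:ℝ)+1) + 1 ≤ (k:ℝ) := by exact_mod_cast h
      have h2 : 1/((n:ℝ)+1)^2 ≤ 1 := by
        rw [div_le_one (by positivity)]; nlinarith [Nat.cast_nonneg (α := ℝ) n]
      have hx1 := hx.1
      push_cast
      linarith
    · -- n+1 > k, so x ≤ k + 1/k² ≤ k+1 ≤ n+1
      apply bump_eq_zero_of_le
      have h1 : (k:ℝ) + 1 ≤ ((n:ℝ)+1) := by exact_mod_cast h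
      have h2 : 1/(k:ℝ)^2 ≤ 1 := by
        rw [div_le_one (by positivity)]; nlinarith
      have hx2 := hx.2
      push_cast
      linarith
  have : ∑' n : ℕ, (fun n : ℕ => bump (n+1) x) n = (fun n : ℕ => bump (n+1) x) (k-1) :=
    tsum_eq_single (k-1) (fun n hn => hkey n hn)
  rw [g, this]
  simp only []
  rw [Nat.sub_add_cancel hk]

lemma g_le {k : ℕ} (hk : 1 ≤ k) {x : ℝ}
    (hx : x ∈ Set.Icc (k:ℝ) ((k:ℝ) + 1/(k:ℝ)^2)) : g x ≤ k := by
  rw [g_eq_bump hk hx]; exact bump_le k x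

lemma g_support {x : ℝ} (h : g x ≠ 0) :
    ∃ n : ℕ, 1 ≤ n ∧ x ∈ Set.Icc (n:ℝ) ((n:ℝ) + 1/(n:ℝ)^2) := by
  by_contra hc
  push_neg at hc
  apply h
  have hz : ∀ n : ℕ, bump (n+1) x = 0 := by
    intro n
    by_contra hb
    exact hc (n+1) (by omega) (bump_support (by omega) hb)
  rw [g]
  simp [hz]

lemma g_plateau {k : ℕ} (hk : 1 ≤ k) {x : ℝ}
    (hx : x ∈ Set.Icc ((k:ℝ) + 1/(3*(k:ℝ)^2)) ((k:ℝ) + 2/(3*(k:ℝ)^2))) :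
    g x = k := by
  have hk1 : (1:ℝ) ≤ (k:ℝ) := by exact_mod_cast hk
  have hk2 : (0:ℝ) < (k:ℝ)^2 := by positivity
  have hx' : x ∈ Set.Icc (k:ℝ) ((k:ℝ) + 1/(k:ℝ)^2) := by
    constructor
    · have : 0 < 1/(3*(k:ℝ)^2) := by positivity
      linarith [hx.1]
    · have : 2/(3*(k:ℝ)^2) ≤ 1/(k:ℝ)^2 := by
        rw [div_le_div_iff₀ (by positivity) hk2]; nlinarith
      linarith [hx.2]
  rw [g_eq_bump hk hx', bump, tent_eq_one, mul_one]
  · have := hx.1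
    have key : 1/(3*(k:ℝ)^2) * (k:ℝ)^2 = 1/3 := by field_simp
    nlinarith [hx.1]
  · have key : 2/(3*(k:ℝ)^2) * (k:ℝ)^2 = 2/3 := by field_simp
    nlinarith [hx.2]

noncomputable def b (x : ℝ) : ℝ := ∫ t in (0:ℝ)..x, g t

lemma deriv_b : deriv b = g :=
  funext fun x => Continuous.deriv_integral g g_continuous 0 x

lemma b_contDiff : ContDiff ℝ 1 b := by
  rw [contDiff_one_iff_deriv]
  refine ⟨fun x => ?_, deriv_b ▸ g_continuous⟩
  exact ((g_continuous.integral_hasStrictDerivAt 0 x).hasDerivAt).differentiableAt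

open Real in
lemma g_sq_integrable :
    Integrable (fun x => (g x)^2 * (π⁻¹ * (1 + x^2)⁻¹)) := by
  set S : Set ℝ := ⋃ n : ℕ, Set.Icc (((n+1:ℕ)):ℝ) ((((n+1:ℕ)):ℝ) + 1/(((n+1:ℕ)):ℝ)^2) with hS
  have hSmeas : MeasurableSet S := MeasurableSet.iUnion fun n => measurableSet_Icc
  have hSvol : volume S < ⊤ := by
    refine lt_of_le_of_lt (measure_iUnion_le _) ?_
    have hsum : Summable (fun n : ℕ => 1/(((n+1:ℕ)):ℝ)^2) := by
      have h0 : Summable (fun n : ℕ => 1/((n:ℝ))^2) :=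
        summable_one_div_nat_pow.2 one_lt_two
      have h1 := (summable_nat_add_iff 1).2 h0
      apply h1.congr
      intro n
      push_cast
      ring
    have heq : ∀ n : ℕ,
        volume (Set.Icc (((n+1:ℕ)):ℝ) ((((n+1:ℕ)):ℝ) + 1/(((n+1:ℕ)):ℝ)^2))
          = ENNReal.ofReal (1/(((n+1:ℕ)):ℝ)^2) := by
      intro n
      rw [Real.volume_Icc]
      congr 1
      ring
    calc ∑' n : ℕ, volume (Set.Icc (((n+1:ℕ)):ℝ) ((((n+1:ℕ)):ℝ) + 1/(((n+1:ℕ)):ℝ)^2))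
        = ∑' n : ℕ, ENNReal.ofReal (1/(((n+1:ℕ)):ℝ)^2) := by
          exact tsum_congr heq
      _ = ENNReal.ofReal (∑' n : ℕ, 1/(((n+1:ℕ)):ℝ)^2) :=
          (ENNReal.ofReal_tsum_of_nonneg (fun n => by positivity) hsum).symm
      _ < ⊤ := ENNReal.ofReal_lt_top
  have hbd : Integrable (S.indicator (fun _ => π⁻¹)) := by
    rw [integrable_indicator_iff hSmeas]
    exact integrableOn_const hSvol.ne
  refine hbd.mono' ?_ ?_
  · have hc : Continuous fun x : ℝ => π⁻¹ * (1 + x^2)⁻¹ :=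
      continuous_const.mul ((continuous_const.add (continuous_pow 2)).inv₀
        (fun x => by show (1:ℝ) + x^2 ≠ 0; positivity))
    exact (((g_continuous.pow 2).mul hc).aestronglyMeasurable)
  · refine Filter.Eventually.of_forall fun x => ?_
    have hπ : (0:ℝ) < π⁻¹ := by positivity
    have hA : (0:ℝ) < 1 + x^2 := by positivity
    rw [Real.norm_eq_abs, abs_of_nonneg (by positivity)]
    by_cases hx : x ∈ S
    · rw [Set.indicator_of_mem hx]
      obtain ⟨n, hn⟩ := Set.mem_iUnion.1 hx
      have hgle : g x ≤ ((n+1:ℕ):ℝ) := g_le (by omega) hn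
      have hxge : ((n+1:ℕ):ℝ) ≤ x := hn.1
      have h1 : g x ^ 2 ≤ 1 + x^2 := by
        nlinarith [g_nonneg x, Nat.cast_nonneg (α := ℝ) (n+1)]
      have : g x ^2 * (π⁻¹ * (1+x^2)⁻¹) = π⁻¹ * (g x ^2 / (1+x^2)) := by ring
      rw [this]
      calc π⁻¹ * (g x ^2 / (1+x^2)) ≤ π⁻¹ * 1 := by
            apply mul_le_mul_of_nonneg_left _ (le_of_lt hπ)
            rw [div_le_one hA]; exact h1
        _ = π⁻¹ := mul_one _
    · rw [Set.indicator_of_notMem hx]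
      have hg0 : g x = 0 := by
        by_contra hg
        obtain ⟨n, hn1, hnx⟩ := g_support hg
        apply hx
        rw [hS]
        apply Set.mem_iUnion.2 ⟨n - 1, ?_⟩
        have : n - 1 + 1 = n := by omega
        rw [this]
        exact hnx
      rw [hg0]
      norm_num

open Real in
lemma key_lower {x : ℝ} (hx3 : 3 ≤ x) :
    π⁻¹/10 ≤ (⨆ s : Set.Icc (-|x|) |x|, |g (s:ℝ)|)^2 * (π⁻¹ * (1 + x^2)⁻¹) := by
  have hπ : (0:ℝ) < π⁻¹ := by positivity
  have hA : (0:ℝ) < 1 + x^2 := by positivity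
  set n := Nat.floor (x-1) with hn
  have hnx : (n:ℝ) ≤ x - 1 := Nat.floor_le (by linarith)
  have hxn : x - 1 < n + 1 := Nat.lt_floor_add_one (x-1)
  have hn1 : 1 ≤ n := Nat.le_floor (by push_cast; linarith)
  have hn1' : (1:ℝ) ≤ (n:ℝ) := by exact_mod_cast hn1
  have hn2 : (0:ℝ) < (n:ℝ)^2 := by positivity
  set s0 := (n:ℝ) + 1/(3*(n:ℝ)^2) with hs0
  have hgs0 : g s0 = n := by
    apply g_plateau hn1
    constructor
    · exact le_refl _
    · have h12 : 1/(3*(n:ℝ)^2) ≤ 2/(3*(n:ℝ)^2) := by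
        gcongr
        norm_num
      linarith
  have hs0mem : s0 ∈ Set.Icc (-|x|) |x| := by
    rw [abs_of_nonneg (by linarith : (0:ℝ) ≤ x)]
    rw [hs0]
    constructor
    · have : (0:ℝ) < 1/(3*(n:ℝ)^2) := by positivity
      nlinarith
    · have h1 : 1/(3*(n:ℝ)^2) ≤ 1 := by
        rw [div_le_one (by positivity)]; nlinarith
      linarith
  have hbdd : BddAbove (Set.range fun s : Set.Icc (-|x|) |x| => |g (s:ℝ)|) := by
    have := isCompact_Icc (a := -|x|) (b := |x|)
    have h2 := this.bddAbove_image
      ((continuous_abs.comp g_continuous).continuousOn (s := Set.Icc (-|x|) |x|))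
    rwa [Set.image_eq_range] at h2
  have hle : (n:ℝ) ≤ ⨆ s : Set.Icc (-|x|) |x|, |g (s:ℝ)| := by
    have h := le_ciSup hbdd (⟨s0, hs0mem⟩ : Set.Icc (-|x|) |x|)
    rw [show |g ((⟨s0, hs0mem⟩ : Set.Icc (-|x|) |x|) : ℝ)| = (n:ℝ) by
      rw [hgs0]; exact abs_of_nonneg (Nat.cast_nonneg n)] at h
    exact h
  set M := ⨆ s : Set.Icc (-|x|) |x|, |g (s:ℝ)| with hM
  have hx2 : x - 2 ≤ M := by linarith
  have hMnn : (0:ℝ) ≤ M := le_trans (by linarith) hx2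
  have hsq : (x-2)^2 ≤ M^2 := by nlinarith
  have h10 : 1 + x^2 ≤ 10*(x-2)^2 := by nlinarith
  calc π⁻¹/10 ≤ (x-2)^2 * (π⁻¹ * (1+x^2)⁻¹) := by
        rw [show (x-2)^2 * (π⁻¹*(1+x^2)⁻¹) = ((x-2)^2*π⁻¹)/(1+x^2) by ring,
          div_le_div_iff₀ (by norm_num) hA]
        nlinarith [mul_le_mul_of_nonneg_left h10 (le_of_lt hπ)]
    _ ≤ M^2 * (π⁻¹ * (1+x^2)⁻¹) := by
        apply mul_le_mul_of_nonneg_right hsq (by positivity)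

open Real in
lemma not_integrable_envelope :
    ¬ Integrable (fun x =>
        (⨆ s : Set.Icc (-|x|) |x|, |g (s:ℝ)|) ^ 2 * (π⁻¹ * (1 + x ^ 2)⁻¹)) := by
  intro h
  have h2 := h.measure_ge_lt_top (ε := π⁻¹/10) (by positivity)
  have h3 : Set.Ici (3:ℝ) ⊆
      {a : ℝ | π⁻¹/10 ≤ (⨆ s : Set.Icc (-|a|) |a|, |g (s:ℝ)|) ^ 2 * (π⁻¹ * (1 + a ^ 2)⁻¹)} :=
    fun x hx => key_lower hx
  have h4 := measure_mono (μ := (volume : Measure ℝ)) h3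
  rw [Real.volume_Ici] at h4
  exact absurd (lt_of_le_of_lt h4 h2) (lt_irrefl _)

end Stmt18

open Real Stmt18 in
/-- There is a C¹ function `b` and a probability density `φ` (which can
be taken proportional to `(1+x²)⁻¹`, with `b'` supported on the intervals
`[n, n+1/n²]`, `|b'| ≤ n` there and `|b'| = n` on a subinterval of positive measure)
such that `∫ b'² φ < ∞` but the envelope `sup_{s∈[-|x|,|x|]}|b'(s)|` is not
square-integrable against `φ`. -/
theorem stmt18 :
    ∃ (b : ℝ → ℝ) (c : ℝ), 0 < c ∧ ContDiff ℝ 1 b ∧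
      (let φ : ℝ → ℝ := fun x => c * (1 + x ^ 2)⁻¹
       (∀ x, 0 ≤ φ x) ∧ (∫ x, φ x = 1) ∧
       -- b' is supported on the intervals [n, n + 1/n²], n ≥ 1
       (∀ x : ℝ, deriv b x ≠ 0 →
          ∃ n : ℕ, 1 ≤ n ∧ x ∈ Set.Icc (n : ℝ) ((n : ℝ) + 1 / (n : ℝ) ^ 2)) ∧
       -- |b'| ≤ n on [n, n + 1/n²]
       (∀ n : ℕ, 1 ≤ n → ∀ x ∈ Set.Icc (n : ℝ) ((n : ℝ) + 1 / (n : ℝ) ^ 2),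
          |deriv b x| ≤ (n : ℝ)) ∧
       -- |b'| = n on a subinterval of positive measure
       (∀ n : ℕ, 1 ≤ n →
          0 < volume {x : ℝ |
            x ∈ Set.Icc (n : ℝ) ((n : ℝ) + 1 / (n : ℝ) ^ 2) ∧ |deriv b x| = (n : ℝ)}) ∧
       Integrable (fun x => (deriv b x) ^ 2 * φ x) ∧
       ¬ Integrable (fun x =>
          (⨆ s : Set.Icc (-|x|) |x|, |deriv b (s : ℝ)|) ^ 2 * φ x)) := by
  refine ⟨Stmt18.b, π⁻¹, by positivity, b_contDiff, ?_⟩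
  simp only [deriv_b]
  refine ⟨fun x => by positivity, ?_, ?_, ?_, ?_, ?_, ?_⟩
  · -- total mass 1
    rw [MeasureTheory.integral_const_mul, integral_univ_inv_one_add_sq,
      inv_mul_cancel₀ Real.pi_ne_zero]
  · -- support
    exact fun x hx => g_support hx
  · -- bound
    intro n hn x hx
    rw [abs_of_nonneg (g_nonneg x)]
    exact g_le hn hx
  · -- plateau of positive measure
    intro n hn
    have hn1 : (1:ℝ) ≤ (n:ℝ) := by exact_mod_cast hn
    have hn2 : (0:ℝ) < (n:ℝ)^2 := by positivity
    have hsub : Set.Icc ((n:ℝ)+1/(3*(n:ℝ)^2)) ((n:ℝ)+2/(3*(n:ℝ)^2)) ⊆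
        {x : ℝ | x ∈ Set.Icc (n : ℝ) ((n : ℝ) + 1 / (n : ℝ) ^ 2) ∧ |g x| = (n : ℝ)} := by
      intro x hx
      have h1 := g_plateau hn hx
      refine ⟨?_, by rw [h1]; exact abs_of_nonneg (Nat.cast_nonneg n)⟩
      constructor
      · have : (0:ℝ) < 1/(3*(n:ℝ)^2) := by positivity
        linarith [hx.1]
      · have : 2/(3*(n:ℝ)^2) ≤ 1/(n:ℝ)^2 := by
          rw [div_le_div_iff₀ (by positivity) hn2]; nlinarith
        linarith [hx.2]
    refine lt_of_lt_of_le ?_ (measure_mono hsub)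
    rw [Real.volume_Icc]
    apply ENNReal.ofReal_pos.2
    have h12 : 1/(3*(n:ℝ)^2) < 2/(3*(n:ℝ)^2) := by
      rw [div_lt_div_iff₀ (by positivity) (by positivity)]; nlinarith
    linarith
  · exact g_sq_integrable
  · exact not_integrable_envelope
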